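/- Let k ≥ 4 be an integer, n ≥ 4 an even integer, and let G be a graph on (k − 1/2)·n vertices whose edges are colored with k colors, with color classes G₁, …, G_k, such that no G_i has a connected component with more than n vertices. Then e(G) ≤ C(v(G), 2) − n²/32, where C(m,2) = m(m−1)/2. -/

import Mathlib

open Finset

/-- The spanning subgraph of `G` consisting of the edges of color `i`. -/
def colorClass {V : Type*} {k : ℕ} (G : SimpleGraph V) (col : Sym2 V → Fin k) (i : Fin k) :
    SimpleGraph V where
  Adj u v := G.Adj u v ∧ col s(u, v) = i
  symm := ⟨fun u v h => ⟨h.1.symm, by rw [Sym2.eq_swap]; exact h.2⟩⟩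
  loopless := ⟨fun v h => G.loopless.irrefl v h.1⟩

lemma balance {ι : Type*} [DecidableEq ι] (f : ι → ℕ) (n : ℕ) (s : Finset ι) :
    (∀ i ∈ s, f i ≤ n) → ∀ t, t ≤ ∑ i ∈ s, f i →
      ∃ u, u ⊆ s ∧ 2 * ∑ i ∈ u, f i ≤ 2 * t + n ∧ 2 * t ≤ 2 * ∑ i ∈ u, f i + n := by
  induction s using Finset.induction_on with
  | empty =>
      intro _ t ht
      simp only [Finset.sum_empty, Nat.le_zero] at ht
      exact ⟨∅, Finset.Subset.refl _, by simp [ht], by simp [ht]⟩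
  | @insert a s ha ih =>
      intro hf t ht
      rw [Finset.sum_insert ha] at ht
      have hfa : f a ≤ n := hf a (Finset.mem_insert_self a s)
      have hfs : ∀ i ∈ s, f i ≤ n := fun i hi => hf i (Finset.mem_insert_of_mem hi)
      by_cases h1 : t ≤ ∑ i ∈ s, f i
      · obtain ⟨u, hu, h2, h3⟩ := ih hfs t h1
        exact ⟨u, hu.trans (Finset.subset_insert a s), h2, h3⟩
      · push_neg at h1
        by_cases h2 : 2 * t ≤ 2 * ∑ i ∈ s, f i + n
        · exact ⟨s, Finset.subset_insert a s, by omega, h2⟩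
        · push_neg at h2
          by_cases h3 : f a ≤ t
          · obtain ⟨u, hu, h4, h5⟩ := ih hfs (t - f a) (by omega)
            have hau : a ∉ u := fun hau => ha (hu hau)
            refine ⟨insert a u, Finset.insert_subset_insert a hu, ?_, ?_⟩ <;>
              rw [Finset.sum_insert hau] <;> omega
          · push_neg at h3
            refine ⟨{a}, ?_, ?_, ?_⟩
            · intro x hx
              rw [Finset.mem_singleton] at hx
              rw [hx]; exact Finset.mem_insert_self a s
            · rw [Finset.sum_singleton]; omega
            · rw [Finset.sum_singleton]; omega

set_option maxHeartbeats 1600000 in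
theorem stmt11 (k : ℕ) (hk : 4 ≤ k) (n : ℕ) (hn : Even n) (hn4 : 4 ≤ n)
    (V : Type*) [Fintype V] (G : SimpleGraph V)
    (hv : (Fintype.card V : ℝ) = ((k : ℝ) - 1 / 2) * n)
    (col : Sym2 V → Fin k)
    (hcomp : ∀ (i : Fin k) (c : (colorClass G col i).ConnectedComponent),
      c.supp.ncard ≤ n) :
    (G.edgeSet.ncard : ℝ) ≤
      (Fintype.card V : ℝ) * ((Fintype.card V : ℝ) - 1) / 2 - (n : ℝ) ^ 2 / 32 := by
  classical
  have hk0 : 0 < k := by omega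
  set N := Fintype.card V with hNdef
  set c0 : Fin k := ⟨0, hk0⟩ with hc0def
  letI instFin : ∀ i : Fin k, Fintype ((colorClass G col i).ConnectedComponent) :=
    fun i => @Fintype.ofFinite _ (Quot.finite _)
  set fib : ∀ i : Fin k, (colorClass G col i).ConnectedComponent → Finset V :=
    fun i c => univ.filter (fun v => (colorClass G col i).connectedComponentMk v = c) with hfibdef
  -- sum of fiber sizes is N
  have fib_sum : ∀ i : Fin k, ∑ c, (fib i c).card = N := by
    intro i
    have := Finset.card_eq_sum_card_fiberwise
      (f := fun v => (colorClass G col i).connectedComponentMk v)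
      (s := (univ : Finset V)) (t := univ) (fun x _ => mem_univ _)
    rw [Finset.card_univ] at this
    exact this.symm
  -- fiber sizes at most n
  have fib_le : ∀ (i : Fin k) c, (fib i c).card ≤ n := by
    intro i c
    have heq : fib i c = c.supp.toFinset := by
      ext v
      simp [hfibdef, SimpleGraph.ConnectedComponent.mem_supp_iff]
    rw [heq, ← Set.ncard_eq_toFinset_card']
    exact hcomp i c
  -- balanced union of color-c0 components
  obtain ⟨u, -, hub1, hub2⟩ := balance (fun c => (fib c0 c).card) n univ
    (fun c _ => fib_le c0 c) (N / 2) (by rw [fib_sum c0]; exact Nat.div_le_self _ _)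
  set A : Finset V := u.biUnion (fib c0) with hAdef
  have hAcard : A.card = ∑ c ∈ u, (fib c0 c).card := by
    refine Finset.card_biUnion ?_
    intro x _ y _ hxy
    rw [Function.onFun, Finset.disjoint_left]
    intro v hvx hvy
    simp only [hfibdef, Finset.mem_filter] at hvx hvy
    exact hxy (hvx.2 ▸ hvy.2 ▸ rfl)
  have hA1 : 2 * A.card ≤ N + n := by rw [hAcard]; omega
  have hA2 : N ≤ 2 * A.card + n + 1 := by rw [hAcard]; omega
  -- A is closed under color-c0 adjacency
  have hclosed : ∀ x ∈ A, ∀ y, (colorClass G col c0).Adj x y → y ∈ A := by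
    intro x hx y hxy
    simp only [hAdef, Finset.mem_biUnion] at hx ⊢
    obtain ⟨c, hc, hxc⟩ := hx
    refine ⟨c, hc, ?_⟩
    simp only [hfibdef, Finset.mem_filter] at hxc ⊢
    exact ⟨mem_univ _,
      ((SimpleGraph.ConnectedComponent.sound hxy.reachable).symm).trans hxc.2⟩
  set B : Finset V := Aᶜ with hBdef
  have hABcard : A.card + B.card = N := by
    have h1 : B.card = N - A.card := Finset.card_compl A
    have h2 : A.card ≤ N := Finset.card_le_univ A
    omega
  set CP : Finset (V × V) := A ×ˢ B with hCPdef
  set CE : Finset (V × V) := CP.filter (fun p => G.Adj p.1 p.2) with hCEdef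
  set CN : Finset (V × V) := CP.filter (fun p => ¬ G.Adj p.1 p.2) with hCNdef
  have hsplit : CE.card + CN.card = A.card * B.card := by
    rw [hCEdef, hCNdef, Finset.card_filter_add_card_filter_not, hCPdef,
      Finset.card_product]
  -- non-adjacent cross pairs inject into complement edges
  have hCN : CN.card ≤ Gᶜ.edgeFinset.card := by
    refine Finset.card_le_card_of_injOn (fun p => s(p.1, p.2)) ?_ ?_
    · intro p hp
      simp only [Finset.mem_coe, hCNdef, hCPdef, Finset.mem_filter, Finset.mem_product] at hp
      obtain ⟨⟨hpA, hpB⟩, hnadj⟩ := hp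
      rw [Finset.mem_coe, SimpleGraph.mem_edgeFinset, SimpleGraph.mem_edgeSet, SimpleGraph.compl_adj]
      refine ⟨?_, hnadj⟩
      intro h
      exact (Finset.mem_compl.mp (h ▸ hpB)) hpA
    · intro p hp q hq hpq
      simp only [Finset.mem_coe, hCNdef, hCPdef, Finset.mem_filter,
        Finset.mem_product] at hp hq
      rcases Sym2.eq_iff.mp hpq with ⟨h1, h2⟩ | ⟨h1, h2⟩
      · exact Prod.ext h1 h2
      · exact absurd (h1 ▸ hp.1.1) (Finset.mem_compl.mp hq.1.2)
  -- edges + complement edges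
  have hcompl_sum : G.edgeFinset.card + Gᶜ.edgeFinset.card = N.choose 2 := by
    rw [← SimpleGraph.card_edgeFinset_top_eq_card_choose_two,
      ← Finset.card_union_of_disjoint
        (SimpleGraph.disjoint_edgeFinset.mpr disjoint_compl_right),
      ← SimpleGraph.edgeFinset_sup]
    congr 1
    exact Set.toFinset_congr (congrArg SimpleGraph.edgeSet sup_compl_eq_top)
  -- cross edges split by color
  have hCE_split : CE.card = ∑ i : Fin k, (CE.filter (fun p => col s(p.1, p.2) = i)).card :=
    Finset.card_eq_sum_card_fiberwise (fun p _ => mem_univ _)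
  have hc0_empty : (CE.filter (fun p => col s(p.1, p.2) = c0)).card = 0 := by
    rw [Finset.card_eq_zero, Finset.filter_eq_empty_iff]
    intro p hp hcol
    simp only [hCEdef, hCPdef, Finset.mem_filter, Finset.mem_product] at hp
    obtain ⟨⟨hpA, hpB⟩, hadj⟩ := hp
    exact Finset.mem_compl.mp hpB (hclosed p.1 hpA p.2 (show G.Adj p.1 p.2 ∧ col s(p.1, p.2) = c0 from ⟨hadj, hcol⟩))
  have hcol_bound : ∀ i : Fin k,
      4 * (CE.filter (fun p => col s(p.1, p.2) = i)).card ≤ n * N := by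
    intro i
    have hsub : CE.filter (fun p => col s(p.1, p.2) = i) ⊆
        (univ : Finset ((colorClass G col i).ConnectedComponent)).biUnion
          (fun c => ((fib i c ∩ A) ×ˢ (fib i c ∩ B))) := by
      intro p hp
      simp only [hCEdef, hCPdef, Finset.mem_filter, Finset.mem_product] at hp
      obtain ⟨⟨⟨hpA, hpB⟩, hadj⟩, hcol⟩ := hp
      have hadj' : (colorClass G col i).Adj p.1 p.2 := show G.Adj p.1 p.2 ∧ col s(p.1, p.2) = i from ⟨hadj, hcol⟩
      refine Finset.mem_biUnion.mpr
        ⟨(colorClass G col i).connectedComponentMk p.1, mem_univ _, ?_⟩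
      rw [Finset.mem_product]
      constructor
      · exact Finset.mem_inter.mpr ⟨Finset.mem_filter.mpr ⟨mem_univ _, rfl⟩, hpA⟩
      · refine Finset.mem_inter.mpr ⟨?_, hpB⟩
        simp only [hfibdef, Finset.mem_filter]
        exact ⟨mem_univ _, (SimpleGraph.ConnectedComponent.sound hadj'.reachable).symm⟩
    have hstep1 : (CE.filter (fun p => col s(p.1, p.2) = i)).card ≤
        ∑ c, (fib i c ∩ A).card * (fib i c ∩ B).card := by
      refine le_trans (Finset.card_le_card hsub) (le_trans Finset.card_biUnion_le ?_)
      refine Finset.sum_le_sum fun c _ => ?_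
      rw [Finset.card_product]
    have hstep2 : ∀ c : (colorClass G col i).ConnectedComponent,
        4 * ((fib i c ∩ A).card * (fib i c ∩ B).card) ≤ n * (fib i c).card := by
      intro c
      set x := (fib i c ∩ A).card
      set y := (fib i c ∩ B).card
      have hdisj : Disjoint (fib i c ∩ A) (fib i c ∩ B) := by
        refine Finset.disjoint_left.mpr ?_
        intro v hv1 hv2
        exact (Finset.mem_compl.mp (Finset.mem_inter.mp hv2).2)
          (Finset.mem_inter.mp hv1).2
      have hxy : x + y ≤ (fib i c).card := by
        rw [← Finset.card_union_of_disjoint hdisj]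
        exact Finset.card_le_card (Finset.union_subset (Finset.inter_subset_left)
          (Finset.inter_subset_left))
      have hfc : (fib i c).card ≤ n := fib_le i c
      have hz : (4 * (x * y) : ℤ) ≤ n * (fib i c).card := by
        have h1 : (4 * (x * y) : ℤ) ≤ ((x : ℤ) + y) ^ 2 := by nlinarith [sq_nonneg ((x : ℤ) - y)]
        have h2 : ((x : ℤ) + y) ^ 2 ≤ ((fib i c).card : ℤ) ^ 2 := by
          have : ((x : ℤ) + y) ≤ ((fib i c).card : ℤ) := by exact_mod_cast hxy
          nlinarith [Int.natCast_nonneg x, Int.natCast_nonneg y]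
        have h3 : (((fib i c).card : ℤ)) ^ 2 ≤ (n : ℤ) * (fib i c).card := by
          have : ((fib i c).card : ℤ) ≤ (n : ℤ) := by exact_mod_cast hfc
          nlinarith [Int.natCast_nonneg (fib i c).card]
        linarith
      exact_mod_cast hz
    calc 4 * (CE.filter (fun p => col s(p.1, p.2) = i)).card
        ≤ 4 * ∑ c, (fib i c ∩ A).card * (fib i c ∩ B).card := by omega
      _ = ∑ c, 4 * ((fib i c ∩ A).card * (fib i c ∩ B).card) := by rw [Finset.mul_sum]
      _ ≤ ∑ c, n * (fib i c).card := Finset.sum_le_sum fun c _ => hstep2 c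
      _ = n * N := by rw [← Finset.mul_sum, fib_sum i]
  have hCE_bound : 4 * CE.card ≤ (k - 1) * (n * N) := by
    have hsum : (4 * (CE.filter (fun p => col s(p.1, p.2) = c0)).card)
        + ∑ i ∈ univ.erase c0, 4 * (CE.filter (fun p => col s(p.1, p.2) = i)).card
        = ∑ i : Fin k, 4 * (CE.filter (fun p => col s(p.1, p.2) = i)).card :=
      Finset.add_sum_erase univ
        (fun i => 4 * (CE.filter (fun p => col s(p.1, p.2) = i)).card)
        (Finset.mem_univ c0)
    have hbd := Finset.sum_le_card_nsmul (univ.erase c0)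
      (fun i => 4 * (CE.filter (fun p => col s(p.1, p.2) = i)).card) (n * N)
      (fun i _ => hcol_bound i)
    rw [Finset.card_erase_of_mem (Finset.mem_univ c0), Finset.card_univ,
      Fintype.card_fin, smul_eq_mul] at hbd
    have htot : 4 * CE.card
        = ∑ i : Fin k, 4 * (CE.filter (fun p => col s(p.1, p.2) = i)).card := by
      rw [hCE_split, Finset.mul_sum]
    omega
  -- now real arithmetic
  have hedge : (G.edgeSet.ncard : ℕ) = G.edgeFinset.card := by
    rw [Set.ncard_eq_toFinset_card']; congr 1
  have hk1 : (1 : ℕ) ≤ k := by omega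
  have f1 : ((A.card : ℝ)) + (B.card : ℝ) = (N : ℝ) := by exact_mod_cast hABcard
  have f2 : 2 * (A.card : ℝ) ≤ (N : ℝ) + (n : ℝ) := by exact_mod_cast hA1
  have f3 : (N : ℝ) ≤ 2 * (A.card : ℝ) + (n : ℝ) + 1 := by exact_mod_cast hA2
  have f4 : (CE.card : ℝ) + (CN.card : ℝ) = (A.card : ℝ) * (B.card : ℝ) := by
    exact_mod_cast hsplit
  have f5 : (CN.card : ℝ) ≤ (Gᶜ.edgeFinset.card : ℝ) := by exact_mod_cast hCN
  have f6 : (G.edgeFinset.card : ℝ) + (Gᶜ.edgeFinset.card : ℝ)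
      = (N : ℝ) * ((N : ℝ) - 1) / 2 := by
    rw [← Nat.cast_choose_two]
    exact_mod_cast hcompl_sum
  have f7 : 4 * (CE.card : ℝ) ≤ ((k : ℝ) - 1) * ((n : ℝ) * (N : ℝ)) := by
    have hcast : ((k : ℝ) - 1) = ((k - 1 : ℕ) : ℝ) := by
      rw [Nat.cast_sub hk1]; norm_num
    rw [hcast]
    exact_mod_cast hCE_bound
  have f8 : (N : ℝ) = ((k : ℝ) - 1 / 2) * n := hv
  have f9 : (4 : ℝ) ≤ (k : ℝ) := by exact_mod_cast hk
  have f10 : (4 : ℝ) ≤ (n : ℝ) := by exact_mod_cast hn4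
  have habl : (N : ℝ) ^ 2 - ((n : ℝ) + 1) ^ 2 ≤ 4 * ((A.card : ℝ) * (B.card : ℝ)) := by
    nlinarith [mul_nonneg
      (by linarith : (0:ℝ) ≤ (n : ℝ) + 1 - ((N : ℝ) - 2 * (A.card : ℝ)))
      (by linarith : (0:ℝ) ≤ (n : ℝ) + 1 - (2 * (A.card : ℝ) - (N : ℝ)))]
  have hrec_lb : (N : ℝ) ^ 2 - ((n : ℝ) + 1) ^ 2 - ((k : ℝ) - 1) * ((n : ℝ) * (N : ℝ))
      ≤ 4 * (Gᶜ.edgeFinset.card : ℝ) := by linarith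
  have hfin : (n : ℝ) ^ 2 / 8 + ((n : ℝ) + 1) ^ 2 + ((k : ℝ) - 1) * ((n : ℝ) * (N : ℝ))
      ≤ (N : ℝ) ^ 2 := by
    rw [f8]
    nlinarith [mul_nonneg (by linarith : (0:ℝ) ≤ (k : ℝ) - 4) (sq_nonneg (n : ℝ)),
      mul_nonneg (by linarith : (0:ℝ) ≤ (n : ℝ) - 4) (by linarith : (0:ℝ) ≤ (n : ℝ))]
  have hgoal : (G.edgeFinset.card : ℝ) ≤ (N : ℝ) * ((N : ℝ) - 1) / 2 - (n : ℝ) ^ 2 / 32 := by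
    linarith
  calc (G.edgeSet.ncard : ℝ) = (G.edgeFinset.card : ℝ) := by exact_mod_cast hedge
    _ ≤ _ := hgoal
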